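/- Let μ : M₃(ℤ) → M₃(ℤ) be a map such that μ(AB) = μ(A)μ(B) for all A, B ∈ M₃(ℤ) and μ(diag(a,b,c)) = diag(bc, ac, ab) for all a, b, c ∈ ℤ. Then there exists a diagonal matrix W, equal to one of diag(1,1,1), diag(1,1,−1), diag(−1,1,1), diag(−1,1,−1), such that μ(A) = W · cof(A) · W for all A ∈ M₃(ℤ), where cof(A) denotes the matrix of cofactors of A, i.e. the transpose of the adjugate of A. -/

import Mathlib

open Matrix

abbrev Mx := Matrix (Fin 3) (Fin 3) ℤ
def E (i j : Fin 3) : Mx := Matrix.single i j 1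
def T (i j : Fin 3) (t : ℤ) : Mx := 1 + t • E i j
def P (i j : Fin 3) : Mx := T i j 1 * T j i (-1) * T i j 1

def S : Set Mx := {A | (∃ d : Fin 3 → ℤ, A = Matrix.diagonal d) ∨ ∃ i j t, i ≠ j ∧ A = T i j t}
def MM : Submonoid Mx := Submonoid.closure S

lemma mem_diag (d : Fin 3 → ℤ) : Matrix.diagonal d ∈ MM :=
  Submonoid.subset_closure (Or.inl ⟨d, rfl⟩)

lemma mem_T {i j : Fin 3} (h : i ≠ j) (t : ℤ) : T i j t ∈ MM :=
  Submonoid.subset_closure (Or.inr ⟨i, j, t, h, rfl⟩)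

lemma T_zero (i j : Fin 3) : T i j 0 = 1 := by simp [T]

lemma sb_mul_sb {i j : Fin 3} (h : i ≠ j) (s t : ℤ) :
    Matrix.single i j s * Matrix.single i j t = (0 : Mx) :=
  Matrix.single_mul_single_of_ne (c := s) i j i h.symm t

lemma T_mul {i j : Fin 3} (h : i ≠ j) (s t : ℤ) : T i j s * T i j t = T i j (s + t) := by
  simp [T, E, Matrix.add_mul, Matrix.mul_add, smul_smul, mul_smul_comm, smul_mul_assoc,
    sb_mul_sb h, add_smul]
  abel

lemma T_mul_inv {i j : Fin 3} (h : i ≠ j) (t : ℤ) : T i j t * T i j (-t) = 1 := by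
  rw [T_mul h, add_neg_cancel, T_zero]

lemma T_left_apply (i j : Fin 3) (t : ℤ) (A : Mx) (p q : Fin 3) :
    (T i j t * A) p q = A p q + (if p = i then t * A j q else 0) := by
  simp only [T, E, Matrix.add_mul, Matrix.one_mul, Matrix.add_apply, Matrix.smul_mul,
    Matrix.smul_apply]
  by_cases h : p = i
  · subst h; simp
  · simp [h]

lemma T_right_apply (i j : Fin 3) (t : ℤ) (A : Mx) (p q : Fin 3) :
    (A * T i j t) p q = A p q + (if q = j then A p i * t else 0) := by
  simp only [T, E, Matrix.mul_add, Matrix.mul_one, Matrix.add_apply, Matrix.mul_smul,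
    Matrix.smul_apply]
  by_cases h : q = j
  · subst h; simp [mul_comm]
  · simp [h]

lemma mem_P {i j : Fin 3} (h : i ≠ j) : P i j ∈ MM :=
  mul_mem (mul_mem (mem_T h 1) (mem_T h.symm (-1))) (mem_T h 1)

lemma mem_of_lft {g g' A : Mx} (hg' : g' ∈ MM) (hgg : g' * g = 1) (h : g * A ∈ MM) : A ∈ MM := by
  have := mul_mem hg' h
  rwa [← mul_assoc, hgg, one_mul] at this

lemma mem_of_rgt {g g' A : Mx} (hg' : g' ∈ MM) (hgg : g * g' = 1) (h : A * g ∈ MM) : A ∈ MM := by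
  have := mul_mem h hg'
  rwa [mul_assoc, hgg, mul_one] at this

lemma mem_of_T_left {i j : Fin 3} (h : i ≠ j) (t : ℤ) {A : Mx} (hm : T i j t * A ∈ MM) : A ∈ MM :=
  mem_of_lft (mem_T h (-t)) (by rw [T_mul h]; norm_num [T_zero]) hm

lemma mem_of_T_right {i j : Fin 3} (h : i ≠ j) (t : ℤ) {A : Mx} (hm : A * T i j t ∈ MM) : A ∈ MM :=
  mem_of_rgt (mem_T h (-t)) (T_mul_inv h t) hm

-- concrete P matrices
lemma P01_eq : P 0 1 = !![0,1,0; -1,0,0; 0,0,1] := by decide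
lemma P02_eq : P 0 2 = !![0,0,1; 0,1,0; -1,0,0] := by decide
lemma P12_eq : P 1 2 = !![1,0,0; 0,0,1; 0,-1,0] := by decide

lemma mem_of_P01_left {A : Mx} (h : P 0 1 * A ∈ MM) : A ∈ MM :=
  mem_of_lft (mul_mem (mem_P (show (0:Fin 3) ≠ 1 by decide)) (mem_diag ![-1,-1,1]))
    (by rw [P01_eq]; decide) h
lemma mem_of_P02_left {A : Mx} (h : P 0 2 * A ∈ MM) : A ∈ MM :=
  mem_of_lft (mul_mem (mem_P (show (0:Fin 3) ≠ 2 by decide)) (mem_diag ![-1,1,-1]))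
    (by rw [P02_eq]; decide) h
lemma mem_of_P12_left {A : Mx} (h : P 1 2 * A ∈ MM) : A ∈ MM :=
  mem_of_lft (mul_mem (mem_P (show (1:Fin 3) ≠ 2 by decide)) (mem_diag ![1,-1,-1]))
    (by rw [P12_eq]; decide) h
lemma mem_of_P01_right {A : Mx} (h : A * P 0 1 ∈ MM) : A ∈ MM :=
  mem_of_rgt (mul_mem (mem_P (show (0:Fin 3) ≠ 1 by decide)) (mem_diag ![-1,-1,1]))
    (by rw [P01_eq]; decide) h
lemma mem_of_P02_right {A : Mx} (h : A * P 0 2 ∈ MM) : A ∈ MM :=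
  mem_of_rgt (mul_mem (mem_P (show (0:Fin 3) ≠ 2 by decide)) (mem_diag ![-1,1,-1]))
    (by rw [P02_eq]; decide) h
lemma mem_of_P12_right {A : Mx} (h : A * P 1 2 ∈ MM) : A ∈ MM :=
  mem_of_rgt (mul_mem (mem_P (show (1:Fin 3) ≠ 2 by decide)) (mem_diag ![1,-1,-1]))
    (by rw [P12_eq]; decide) h

lemma P01_mul (A : Mx) (p q : Fin 3) :
    (P 0 1 * A) p q = if p = 0 then A 1 q else if p = 1 then -(A 0 q) else A p q := by
  rw [P01_eq]; fin_cases p <;> simp [Matrix.mul_apply, Fin.sum_univ_three]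
lemma P02_mul (A : Mx) (p q : Fin 3) :
    (P 0 2 * A) p q = if p = 0 then A 2 q else if p = 2 then -(A 0 q) else A p q := by
  rw [P02_eq]; fin_cases p <;> simp [Matrix.mul_apply, Fin.sum_univ_three]
lemma P12_mul (A : Mx) (p q : Fin 3) :
    (P 1 2 * A) p q = if p = 1 then A 2 q else if p = 2 then -(A 1 q) else A p q := by
  rw [P12_eq]; fin_cases p <;> simp [Matrix.mul_apply, Fin.sum_univ_three]
lemma mul_P01 (A : Mx) (p q : Fin 3) :
    (A * P 0 1) p q = if q = 0 then -(A p 1) else if q = 1 then A p 0 else A p q := by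
  rw [P01_eq]; fin_cases q <;> simp [Matrix.mul_apply, Fin.sum_univ_three, Matrix.vecHead, Matrix.vecTail]
lemma mul_P02 (A : Mx) (p q : Fin 3) :
    (A * P 0 2) p q = if q = 0 then -(A p 2) else if q = 2 then A p 0 else A p q := by
  rw [P02_eq]; fin_cases q <;> simp [Matrix.mul_apply, Fin.sum_univ_three, Matrix.vecHead, Matrix.vecTail]
lemma mul_P12 (A : Mx) (p q : Fin 3) :
    (A * P 1 2) p q = if q = 1 then -(A p 2) else if q = 2 then A p 1 else A p q := by
  rw [P12_eq]; fin_cases q <;> simp [Matrix.mul_apply, Fin.sum_univ_three, Matrix.vecHead, Matrix.vecTail]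

lemma blockDiagDone {A : Mx} (h01 : A 0 1 = 0) (h02 : A 0 2 = 0) (h10 : A 1 0 = 0)
    (h20 : A 2 0 = 0) (h12 : A 1 2 = 0) (h21 : A 2 1 = 0) : A ∈ MM := by
  have : A = Matrix.diagonal ![A 0 0, A 1 1, A 2 2] := by
    ext p q
    fin_cases p <;> fin_cases q <;> simp [Matrix.diagonal_apply, *]
  rw [this]; exact mem_diag _

lemma emod_natAbs_lt {a r : ℤ} {n : ℕ} (h0 : 0 ≤ r) (hr : r < a) (ha : a.natAbs ≤ n + 1) :
    r.natAbs ≤ n := by omega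

lemma block2 : ∀ n : ℕ, ∀ A : Mx, A 0 1 = 0 → A 0 2 = 0 → A 1 0 = 0 → A 2 0 = 0 →
    ∀ p q : Fin 3, p ≠ 0 → q ≠ 0 → A p q ≠ 0 → (A p q).natAbs ≤ n → A ∈ MM := by
  intro n
  induction n with
  | zero =>
    intro A _ _ _ _ p q _ _ hne hle
    exact absurd (Int.natAbs_eq_zero.mp (Nat.le_zero.mp hle)) hne
  | succ n ih =>
    -- pivot in position (1,1), positive
    have pivot : ∀ A : Mx, A 0 1 = 0 → A 0 2 = 0 → A 1 0 = 0 → A 2 0 = 0 →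
        0 < A 1 1 → (A 1 1).natAbs ≤ n + 1 → A ∈ MM := by
      intro A h01 h02 h10 h20 hpos hle
      by_cases hdvd : A 1 1 ∣ A 2 1
      · -- clear (2,1)
        apply mem_of_T_left (show (2:Fin 3) ≠ 1 by decide) (-(A 2 1 / A 1 1))
        set B := T 2 1 (-(A 2 1 / A 1 1)) * A with hB
        have e0 : ∀ q, B 0 q = A 0 q := by intro q; rw [hB, T_left_apply]; simp
        have e1 : ∀ q, B 1 q = A 1 q := by intro q; rw [hB, T_left_apply]; simp
        have e2 : ∀ q, B 2 q = A 2 q + -(A 2 1 / A 1 1) * A 1 q := by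
          intro q; rw [hB, T_left_apply]; simp
        have hB21 : B 2 1 = 0 := by
          rw [e2 1, neg_mul]
          rw [Int.ediv_mul_cancel hdvd]; ring
        by_cases hdvd2 : A 1 1 ∣ A 1 2
        · -- clear (1,2), done
          apply mem_of_T_right (show (1:Fin 3) ≠ 2 by decide) (-(A 1 2 / A 1 1))
          set C := B * T 1 2 (-(A 1 2 / A 1 1)) with hC
          have f1 : ∀ p, C p 1 = B p 1 := by intro p; rw [hC, T_right_apply]; simp
          have f0 : ∀ p, C p 0 = B p 0 := by intro p; rw [hC, T_right_apply]; simp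
          have f2 : ∀ p, C p 2 = B p 2 + B p 1 * -(A 1 2 / A 1 1) := by
            intro p; rw [hC, T_right_apply]; simp
          apply blockDiagDone
          · rw [f1 0, e0 1, h01]
          · rw [f2 0, e0 2, e0 1, h01, h02]; ring
          · rw [f0 1, e1 0, h10]
          · rw [f0 2, e2 0, h10, h20]; ring
          · rw [f2 1, e1 2, e1 1, mul_neg, Int.mul_ediv_cancel' hdvd2]; ring
          · rw [f1 2, hB21]
        · -- euclid on (1,2)
          apply mem_of_T_right (show (1:Fin 3) ≠ 2 by decide) (-(A 1 2 / A 1 1))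
          set C := B * T 1 2 (-(A 1 2 / A 1 1)) with hC
          have f1 : ∀ p, C p 1 = B p 1 := by intro p; rw [hC, T_right_apply]; simp
          have f0 : ∀ p, C p 0 = B p 0 := by intro p; rw [hC, T_right_apply]; simp
          have f2 : ∀ p, C p 2 = B p 2 + B p 1 * -(A 1 2 / A 1 1) := by
            intro p; rw [hC, T_right_apply]; simp
          have hC12 : C 1 2 = A 1 2 % A 1 1 := by
            rw [f2 1, e1 2, e1 1, Int.emod_def]; ring
          have hr0 : 0 ≤ A 1 2 % A 1 1 := Int.emod_nonneg _ (by omega)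
          have hrlt : A 1 2 % A 1 1 < A 1 1 := Int.emod_lt_of_pos _ hpos
          have hrne : A 1 2 % A 1 1 ≠ 0 := fun h =>
            hdvd2 (Int.dvd_of_emod_eq_zero h)
          exact ih C (by rw [f1 0, e0 1, h01]) (by rw [f2 0, e0 2, e0 1, h01, h02]; ring)
            (by rw [f0 1, e1 0, h10]) (by rw [f0 2, e2 0, h10, h20]; ring)
            1 2 (by decide) (by decide) (by rw [hC12]; exact hrne)
            (by rw [hC12]; exact emod_natAbs_lt hr0 hrlt hle)
      · -- euclid on (2,1)
        apply mem_of_T_left (show (2:Fin 3) ≠ 1 by decide) (-(A 2 1 / A 1 1))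
        set B := T 2 1 (-(A 2 1 / A 1 1)) * A with hB
        have e0 : ∀ q, B 0 q = A 0 q := by intro q; rw [hB, T_left_apply]; simp
        have e1 : ∀ q, B 1 q = A 1 q := by intro q; rw [hB, T_left_apply]; simp
        have e2 : ∀ q, B 2 q = A 2 q + -(A 2 1 / A 1 1) * A 1 q := by
          intro q; rw [hB, T_left_apply]; simp
        have hB21 : B 2 1 = A 2 1 % A 1 1 := by rw [e2 1, Int.emod_def]; ring
        have hr0 : 0 ≤ A 2 1 % A 1 1 := Int.emod_nonneg _ (by omega)
        have hrlt : A 2 1 % A 1 1 < A 1 1 := Int.emod_lt_of_pos _ hpos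
        have hrne : A 2 1 % A 1 1 ≠ 0 := fun h =>
          hdvd (Int.dvd_of_emod_eq_zero h)
        exact ih B (by rw [e0 1, h01]) (by rw [e0 2, h02]) (by rw [e1 0, h10])
          (by rw [e2 0, h10, h20]; ring) 2 1 (by decide) (by decide)
          (by rw [hB21]; exact hrne) (by rw [hB21]; exact emod_natAbs_lt hr0 hrlt hle)
    -- pivot in position (p,1), any sign
    have pivotRow : ∀ A : Mx, A 0 1 = 0 → A 0 2 = 0 → A 1 0 = 0 → A 2 0 = 0 →
        ∀ p : Fin 3, p ≠ 0 → A p 1 ≠ 0 → (A p 1).natAbs ≤ n + 1 → A ∈ MM := by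
      -- first: pivot at (1,1) any sign
      have pivot11 : ∀ A : Mx, A 0 1 = 0 → A 0 2 = 0 → A 1 0 = 0 → A 2 0 = 0 →
          A 1 1 ≠ 0 → (A 1 1).natAbs ≤ n + 1 → A ∈ MM := by
        intro A h01 h02 h10 h20 hne hle
        rcases lt_or_gt_of_ne hne with hneg | hpos
        · apply mem_of_lft (g := Matrix.diagonal ![1,-1,1]) (mem_diag ![1,-1,1]) (by decide)
          set B := Matrix.diagonal ![1,-1,1] * A with hB
          have eB : ∀ p q, B p q = ![1,-1,1] p * A p q := by
            intro p q; rw [hB, Matrix.diagonal_mul]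
          apply pivot B
          · rw [eB]; simp [h01]
          · rw [eB]; simp [h02]
          · rw [eB]; simp [h10]
          · rw [eB]; simp [h20]
          · rw [eB]; simp; omega
          · rw [eB]; simpa using (by omega : ((-1 : ℤ) * A 1 1).natAbs ≤ n + 1)
        · exact pivot A h01 h02 h10 h20 hpos hle
      intro A h01 h02 h10 h20 p hp hne hle
      fin_cases p
      · exact absurd rfl hp
      · exact pivot11 A h01 h02 h10 h20 hne hle
      · -- swap rows 1 2
        apply mem_of_P12_left
        set B := P 1 2 * A with hB
        have eB : ∀ p q, B p q = if p = 1 then A 2 q else if p = 2 then -(A 1 q) else A p q :=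
          fun p q => P12_mul A p q
        exact pivot11 B (by rw [eB]; simpa using h01) (by rw [eB]; simpa using h02)
          (by rw [eB]; simpa using h20) (by rw [eB]; simpa using h10)
          (by rw [eB]; simpa using hne) (by rw [eB]; simpa using hle)
    intro A h01 h02 h10 h20 p q hp hq hne hle
    fin_cases q
    · exact absurd rfl hq
    · exact pivotRow A h01 h02 h10 h20 p hp hne hle
    · -- swap columns 1 2
      apply mem_of_P12_right
      set B := A * P 1 2 with hB
      have eB : ∀ p q, B p q = if q = 1 then -(A p 2) else if q = 2 then A p 1 else A p q :=
        fun p q => mul_P12 A p q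
      exact pivotRow B (by rw [eB]; simpa using h02) (by rw [eB]; simpa using h01)
        (by rw [eB]; simpa using h10) (by rw [eB]; simpa using h20) p hp
        (by rw [eB]; simpa using hne) (by rw [eB]; simpa using hle)

lemma main3 : ∀ n : ℕ, ∀ A : Mx, ∀ p q : Fin 3, A p q ≠ 0 → (A p q).natAbs ≤ n → A ∈ MM := by
  intro n
  induction n with
  | zero =>
    intro A p q hne hle
    exact absurd (Int.natAbs_eq_zero.mp (Nat.le_zero.mp hle)) hne
  | succ n ih =>
    have pivot : ∀ A : Mx, 0 < A 0 0 → (A 0 0).natAbs ≤ n + 1 → A ∈ MM := by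
      intro A hpos hle
      apply mem_of_T_left (show (1:Fin 3) ≠ 0 by decide) (-(A 1 0 / A 0 0))
      set B := T 1 0 (-(A 1 0 / A 0 0)) * A with hB
      have b0 : ∀ q, B 0 q = A 0 q := by intro q; rw [hB, T_left_apply]; simp
      have b2 : ∀ q, B 2 q = A 2 q := by intro q; rw [hB, T_left_apply]; simp
      have b1 : ∀ q, B 1 q = A 1 q + -(A 1 0 / A 0 0) * A 0 q := by
        intro q; rw [hB, T_left_apply]; simp
      by_cases d10 : A 0 0 ∣ A 1 0
      case neg =>
        have hB10 : B 1 0 = A 1 0 % A 0 0 := by rw [b1 0, Int.emod_def]; ring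
        refine ih B 1 0 ?_ ?_
        · rw [hB10]; exact fun h => d10 (Int.dvd_of_emod_eq_zero h)
        · rw [hB10]
          exact emod_natAbs_lt (Int.emod_nonneg _ (by omega)) (Int.emod_lt_of_pos _ hpos) hle
      case pos =>
      have hB10 : B 1 0 = 0 := by
        rw [b1 0, neg_mul, Int.ediv_mul_cancel d10]; ring
      apply mem_of_T_left (show (2:Fin 3) ≠ 0 by decide) (-(B 2 0 / B 0 0))
      set C := T 2 0 (-(B 2 0 / B 0 0)) * B with hC
      have c0 : ∀ q, C 0 q = B 0 q := by intro q; rw [hC, T_left_apply]; simp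
      have c1 : ∀ q, C 1 q = B 1 q := by intro q; rw [hC, T_left_apply]; simp
      have c2 : ∀ q, C 2 q = B 2 q + -(B 2 0 / B 0 0) * B 0 q := by
        intro q; rw [hC, T_left_apply]; simp
      have hC00 : C 0 0 = A 0 0 := by rw [c0 0, b0 0]
      by_cases d20 : B 0 0 ∣ B 2 0
      case neg =>
        have hC20 : C 2 0 = B 2 0 % B 0 0 := by rw [c2 0, Int.emod_def]; ring
        have hBpos : 0 < B 0 0 := by rw [b0 0]; exact hpos
        refine ih C 2 0 ?_ ?_
        · rw [hC20]; exact fun h => d20 (Int.dvd_of_emod_eq_zero h)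
        · rw [hC20]
          exact emod_natAbs_lt (Int.emod_nonneg _ (by omega)) (Int.emod_lt_of_pos _ hBpos)
            (by rw [b0 0]; exact hle)
      case pos =>
      have hC20 : C 2 0 = 0 := by
        rw [c2 0, neg_mul, Int.ediv_mul_cancel d20]; ring
      have hC10 : C 1 0 = 0 := by rw [c1 0, hB10]
      apply mem_of_T_right (show (0:Fin 3) ≠ 1 by decide) (-(C 0 1 / C 0 0))
      set D := C * T 0 1 (-(C 0 1 / C 0 0)) with hD
      have dd0 : ∀ p, D p 0 = C p 0 := by intro p; rw [hD, T_right_apply]; simp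
      have dd2 : ∀ p, D p 2 = C p 2 := by intro p; rw [hD, T_right_apply]; simp
      have dd1 : ∀ p, D p 1 = C p 1 + C p 0 * -(C 0 1 / C 0 0) := by
        intro p; rw [hD, T_right_apply]; simp
      have hD00 : D 0 0 = A 0 0 := by rw [dd0 0, hC00]
      by_cases d01 : C 0 0 ∣ C 0 1
      case neg =>
        have hD01 : D 0 1 = C 0 1 % C 0 0 := by rw [dd1 0, Int.emod_def]; ring
        have hCpos : 0 < C 0 0 := by rw [hC00]; exact hpos
        refine ih D 0 1 ?_ ?_
        · rw [hD01]; exact fun h => d01 (Int.dvd_of_emod_eq_zero h)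
        · rw [hD01]
          exact emod_natAbs_lt (Int.emod_nonneg _ (by omega)) (Int.emod_lt_of_pos _ hCpos)
            (by rw [hC00]; exact hle)
      case pos =>
      have hD01 : D 0 1 = 0 := by
        rw [dd1 0, mul_neg, Int.mul_ediv_cancel' d01]; ring
      apply mem_of_T_right (show (0:Fin 3) ≠ 2 by decide) (-(D 0 2 / D 0 0))
      set F := D * T 0 2 (-(D 0 2 / D 0 0)) with hF
      have f0 : ∀ p, F p 0 = D p 0 := by intro p; rw [hF, T_right_apply]; simp
      have f1 : ∀ p, F p 1 = D p 1 := by intro p; rw [hF, T_right_apply]; simp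
      have f2 : ∀ p, F p 2 = D p 2 + D p 0 * -(D 0 2 / D 0 0) := by
        intro p; rw [hF, T_right_apply]; simp
      by_cases d02 : D 0 0 ∣ D 0 2
      case neg =>
        have hF02 : F 0 2 = D 0 2 % D 0 0 := by rw [f2 0, Int.emod_def]; ring
        have hDpos : 0 < D 0 0 := by rw [hD00]; exact hpos
        refine ih F 0 2 ?_ ?_
        · rw [hF02]; exact fun h => d02 (Int.dvd_of_emod_eq_zero h)
        · rw [hF02]
          exact emod_natAbs_lt (Int.emod_nonneg _ (by omega)) (Int.emod_lt_of_pos _ hDpos)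
            (by rw [hD00]; exact hle)
      case pos =>
      have hF02 : F 0 2 = 0 := by
        rw [f2 0, mul_neg, Int.mul_ediv_cancel' d02]; ring
      have hF01 : F 0 1 = 0 := by rw [f1 0, hD01]
      have hF10 : F 1 0 = 0 := by rw [f0 1, dd0 1, hC10]
      have hF20 : F 2 0 = 0 := by rw [f0 2, dd0 2, hC20]
      by_cases h12 : F 1 2 = 0
      · by_cases h21 : F 2 1 = 0
        · exact blockDiagDone hF01 hF02 hF10 hF20 h12 h21
        · exact block2 (F 2 1).natAbs F hF01 hF02 hF10 hF20 2 1 (by decide) (by decide)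
            h21 le_rfl
      · exact block2 (F 1 2).natAbs F hF01 hF02 hF10 hF20 1 2 (by decide) (by decide)
          h12 le_rfl
    have pivotRow0 : ∀ A : Mx, ∀ p : Fin 3, A p 0 ≠ 0 → (A p 0).natAbs ≤ n + 1 → A ∈ MM := by
      have pivot00 : ∀ A : Mx, A 0 0 ≠ 0 → (A 0 0).natAbs ≤ n + 1 → A ∈ MM := by
        intro A hne hle
        rcases lt_or_gt_of_ne hne with hneg | hpos
        · apply mem_of_lft (g := Matrix.diagonal ![-1,1,1]) (mem_diag ![-1,1,1]) (by decide)
          set B := Matrix.diagonal ![-1,1,1] * A with hB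
          have eB : ∀ p q, B p q = ![-1,1,1] p * A p q := by
            intro p q; rw [hB, Matrix.diagonal_mul]
          apply pivot B
          · rw [eB]; simp; omega
          · rw [eB]; simpa using (by omega : ((-1 : ℤ) * A 0 0).natAbs ≤ n + 1)
        · exact pivot A hpos hle
      intro A p hne hle
      fin_cases p
      · exact pivot00 A hne hle
      · apply mem_of_P01_left
        set B := P 0 1 * A with hB
        have eB : ∀ p q, B p q = if p = 0 then A 1 q else if p = 1 then -(A 0 q) else A p q :=
          fun p q => P01_mul A p q
        exact pivot00 B (by rw [eB]; simpa using hne) (by rw [eB]; simpa using hle)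
      · apply mem_of_P02_left
        set B := P 0 2 * A with hB
        have eB : ∀ p q, B p q = if p = 0 then A 2 q else if p = 2 then -(A 0 q) else A p q :=
          fun p q => P02_mul A p q
        exact pivot00 B (by rw [eB]; simpa using hne) (by rw [eB]; simpa using hle)
    intro A p q hne hle
    fin_cases q
    · exact pivotRow0 A p hne hle
    · apply mem_of_P01_right
      set B := A * P 0 1 with hB
      have eB : ∀ p q, B p q = if q = 0 then -(A p 1) else if q = 1 then A p 0 else A p q :=
        fun p q => mul_P01 A p q
      apply pivotRow0 B p
      · rw [eB]; simpa using hne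
      · rw [eB]; simpa using hle
    · apply mem_of_P02_right
      set B := A * P 0 2 with hB
      have eB : ∀ p q, B p q = if q = 0 then -(A p 2) else if q = 2 then A p 0 else A p q :=
        fun p q => mul_P02 A p q
      apply pivotRow0 B p
      · rw [eB]; simpa using hne
      · rw [eB]; simpa using hle

lemma genAll (A : Mx) : A ∈ MM := by
  by_cases h : A = 0
  · rw [h, show (0 : Mx) = Matrix.diagonal (fun _ => 0) by simp]
    exact mem_diag _
  · have : ∃ p q, A p q ≠ 0 := by
      by_contra hc
      push_neg at hc
      exact h (by ext p q; simpa using hc p q)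
    obtain ⟨p, q, hne⟩ := this
    exact main3 (A p q).natAbs A p q hne le_rfl

lemma tri3 : ∀ i j k : Fin 3, i ≠ j → i ≠ k → j ≠ k → ∀ r : Fin 3, r = i ∨ r = j ∨ r = k := by
  decide

lemma exists_third : ∀ i j : Fin 3, i ≠ j → ∃ k : Fin 3, i ≠ k ∧ j ≠ k := by decide

lemma univ3 : ∀ i j k : Fin 3, i ≠ j → i ≠ k → j ≠ k →
    (Finset.univ : Finset (Fin 3)) = {i, j, k} := by decide

lemma sum3 {i j k : Fin 3} (hij : i ≠ j) (hik : i ≠ k) (hjk : j ≠ k) (f : Fin 3 → ℤ) :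
    ∑ r, f r = f i + f j + f k := by
  rw [univ3 i j k hij hik hjk, Finset.sum_insert (by simp [hij, hik]),
    Finset.sum_insert (by simp [hjk]), Finset.sum_singleton, add_assoc]

lemma T_apply (i j : Fin 3) (t : ℤ) (p q : Fin 3) :
    T i j t p q = (if p = q then 1 else 0) + (if p = i ∧ q = j then t else 0) := by
  simp only [T, Matrix.add_apply, Matrix.smul_apply, smul_eq_mul, E, Matrix.single,
    Matrix.of_apply, Matrix.one_apply]
  congr 1
  by_cases h : p = i ∧ q = j
  · rw [if_pos ⟨h.1.symm, h.2.symm⟩, if_pos h, mul_one]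
  · rw [if_neg (fun hc => h ⟨hc.1.symm, hc.2.symm⟩), if_neg h, mul_zero]

lemma scalarCore (M : ℤ → Mx) (i j k : Fin 3) (hij : i ≠ j) (hik : i ≠ k) (hjk : j ≠ k)
    (H0 : M 0 = 1)
    (H1 : ∀ t p q, (if p = i then 1 else t) * M 1 p q = M t p q * (if q = i then 1 else t))
    (H2 : ∀ t p q, (if p = j then 1 else t) * M t p q = M 1 p q * (if q = j then 1 else t))
    (H3 : ∀ s t, M s * M t = M (s + t)) :
    ∀ t, M t = T j i (t * M 1 j i) := by
  have hii : ∀ t, M t i i = 1 := by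
    intro t
    have h := H1 t i i
    have h0 := H1 0 i i
    simp only [if_pos rfl, ite_true, eq_self_iff_true, one_mul, mul_one, H0,
      Matrix.one_apply_eq] at h h0
    rw [← h]; exact h0
  have hijE : ∀ t, M t i j = 0 := by
    have hNij : M 1 i j = 0 := by
      have h := H1 0 i j
      simp only [if_pos rfl, ite_true, eq_self_iff_true, one_mul, if_neg hij.symm,
        mul_zero] at h
      exact h
    intro t
    rcases eq_or_ne t 0 with rfl | ht
    · rw [H0]; exact Matrix.one_apply_ne hij
    · have h := H2 t i j
      simp only [if_neg hij, if_pos rfl, ite_true, eq_self_iff_true, mul_one, hNij,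
        zero_mul] at h
      exact (mul_eq_zero.mp h).resolve_left ht
  have hikE : ∀ t, M t i k = 0 := by
    have hNik : M 1 i k = 0 := by
      have h := H1 0 i k
      simp only [if_pos rfl, ite_true, eq_self_iff_true, one_mul, if_neg hik.symm,
        mul_zero] at h
      exact h
    intro t
    rcases eq_or_ne t 0 with rfl | ht
    · rw [H0]; exact Matrix.one_apply_ne hik
    · have h := H2 t i k
      simp only [if_neg hij, if_neg hjk.symm, hNik, zero_mul] at h
      exact (mul_eq_zero.mp h).resolve_left ht
  have hjiE : ∀ t, M t j i = t * M 1 j i := by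
    intro t
    have h := H1 t j i
    simp only [if_neg hij.symm, if_pos rfl, ite_true, eq_self_iff_true, mul_one] at h
    exact h.symm
  have hjjE : ∀ t, M t j j = 1 := by
    intro t
    have h := H2 t j j
    have h0 := H2 0 j j
    simp only [if_pos rfl, ite_true, eq_self_iff_true, one_mul, mul_one, H0,
      Matrix.one_apply_eq] at h h0
    rw [h]; exact h0.symm
  have hjkE : ∀ t, M t j k = 0 := by
    have hNjk : M 1 j k = 0 := by
      have h1 := H1 2 j k
      simp only [if_neg hij.symm, if_neg hik.symm] at h1
      have h2 := H2 2 j k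
      simp only [if_pos rfl, ite_true, eq_self_iff_true, one_mul, if_neg hjk.symm] at h2
      rw [h2] at h1; linarith
    intro t
    have h := H2 t j k
    simp only [if_pos rfl, ite_true, eq_self_iff_true, one_mul, if_neg hjk.symm, hNjk,
      zero_mul] at h
    rw [h]
  have hkiE : ∀ t, M t k i = 0 := by
    have hNki : M 1 k i = 0 := by
      have h1 := H1 2 k i
      simp only [if_neg hik.symm, if_pos rfl, ite_true, eq_self_iff_true, mul_one] at h1
      have h2 := H2 2 k i
      simp only [if_neg hjk.symm, if_neg hij] at h2
      rw [← h1] at h2; linarith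
    intro t
    have h := H1 t k i
    simp only [if_neg hik.symm, if_pos rfl, ite_true, eq_self_iff_true, mul_one, hNki,
      mul_zero] at h
    exact h.symm
  have hkjE : ∀ t, M t k j = 0 := by
    have hNkj : M 1 k j = 0 := by
      have h := H2 0 k j
      simp only [if_neg hjk.symm, if_pos rfl, ite_true, eq_self_iff_true, mul_one,
        zero_mul] at h
      exact h.symm
    intro t
    rcases eq_or_ne t 0 with rfl | ht
    · rw [H0]; exact Matrix.one_apply_ne hjk.symm
    · have h := H2 t k j
      simp only [if_neg hjk.symm, if_pos rfl, ite_true, eq_self_iff_true, mul_one, hNkj,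
        zero_mul] at h
      exact (mul_eq_zero.mp h).resolve_left ht
  have hkkE : ∀ t, M t k k = 1 := by
    have hNkk : M 1 k k = 1 := by
      have hprod := H3 1 1
      have he : (M 1 * M 1) k k = M 2 k k := by rw [hprod]; norm_num
      rw [Matrix.mul_apply, sum3 hij hik hjk] at he
      rw [hkiE 1, hkjE 1, zero_mul, zero_mul, zero_add, zero_add] at he
      have h2 : M 2 k k = M 1 k k := by
        have h := H1 2 k k
        simp only [if_neg hik.symm] at h
        linarith
      rw [h2] at he
      have hinv := H3 1 (-1)
      have he2 : (M 1 * M (-1)) k k = 1 := by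
        rw [hinv]; norm_num [H0, Matrix.one_apply_eq]
      rw [Matrix.mul_apply, sum3 hij hik hjk] at he2
      rw [hkiE 1, hkjE 1, zero_mul, zero_mul, zero_add, zero_add] at he2
      have hm1 : M (-1) k k = M 1 k k := by
        have h := H1 (-1) k k
        simp only [if_neg hik.symm] at h
        linarith
      rw [hm1] at he2
      nlinarith [he, he2]
    intro t
    rcases eq_or_ne t 0 with rfl | ht
    · rw [H0]; exact Matrix.one_apply_eq k
    · have h := H1 t k k
      simp only [if_neg hik.symm] at h
      rw [hNkk, mul_one] at h
      have h2 : M t k k * t = 1 * t := by rw [one_mul]; exact h.symm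
      exact mul_right_cancel₀ ht h2
  intro t
  ext p q
  rcases tri3 i j k hij hik hjk p with hp | hp | hp <;> rw [hp] <;>
    rcases tri3 i j k hij hik hjk q with hq | hq | hq <;> rw [hq] <;>
      simp [T_apply, hii t, hijE t, hikE t, hjiE t, hjjE t, hjkE t, hkiE t, hkjE t, hkkE t,
        hij, hik, hjk, hij.symm, hik.symm, hjk.symm]

def cdv (d : Fin 3 → ℤ) : Fin 3 → ℤ := ![d 1 * d 2, d 0 * d 2, d 0 * d 1]

section WithMu
variable (μ : Mx → Mx)
variable (hmul : ∀ A B : Mx, μ (A * B) = μ A * μ B)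
variable (hdiag : ∀ a b c : ℤ,
  μ (Matrix.diagonal ![a, b, c]) = Matrix.diagonal ![b * c, a * c, a * b])

include hdiag in
lemma mu_one : μ 1 = 1 := by
  have h := hdiag 1 1 1
  have hv : (![(1:ℤ), 1, 1]) = fun _ => (1:ℤ) := by funext p; fin_cases p <;> rfl
  have hv2 : (![(1:ℤ)*1, 1*1, 1*1]) = fun _ => (1:ℤ) := by funext p; fin_cases p <;> rfl
  rw [hv2] at h
  rw [hv] at h
  rwa [show Matrix.diagonal (fun _ => (1:ℤ)) = (1 : Mx) from Matrix.diagonal_one] at h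

include hdiag in
lemma mu_diag (d : Fin 3 → ℤ) :
    μ (Matrix.diagonal d) = Matrix.diagonal (cdv d) := by
  have hd : d = ![d 0, d 1, d 2] := by funext p; fin_cases p <;> rfl
  calc μ (Matrix.diagonal d) = μ (Matrix.diagonal ![d 0, d 1, d 2]) := by rw [← hd]
    _ = Matrix.diagonal ![d 1 * d 2, d 0 * d 2, d 0 * d 1] := hdiag _ _ _
    _ = Matrix.diagonal (cdv d) := rfl

end WithMu

lemma diag_mul_E (d : Fin 3 → ℤ) (i j : Fin 3) :
    Matrix.diagonal d * E i j = d i • E i j := by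
  ext p q
  simp only [Matrix.diagonal_mul, Matrix.smul_apply, E, Matrix.single,
    Matrix.of_apply, smul_eq_mul]
  by_cases h : i = p ∧ j = q
  · rw [if_pos h, ← h.1]
  · rw [if_neg h, mul_zero, mul_zero]

lemma E_mul_diag (d : Fin 3 → ℤ) (i j : Fin 3) :
    E i j * Matrix.diagonal d = d j • E i j := by
  ext p q
  simp only [Matrix.mul_diagonal, Matrix.smul_apply, E, Matrix.single,
    Matrix.of_apply, smul_eq_mul]
  by_cases h : i = p ∧ j = q
  · rw [if_pos h, ← h.2]; ring
  · rw [if_neg h, zero_mul, mul_zero]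

lemma diag_mul_T (d : Fin 3 → ℤ) (i j : Fin 3) (s : ℤ) :
    Matrix.diagonal d * T i j s = Matrix.diagonal d + (s * d i) • E i j := by
  rw [T, Matrix.mul_add, Matrix.mul_one, Matrix.mul_smul, diag_mul_E, smul_smul]

lemma T_mul_diag (d : Fin 3 → ℤ) (i j : Fin 3) (s : ℤ) :
    T i j s * Matrix.diagonal d = Matrix.diagonal d + (s * d j) • E i j := by
  rw [T, Matrix.add_mul, Matrix.one_mul, Matrix.smul_mul, E_mul_diag, smul_smul]

lemma cd_ind : ∀ (i p : Fin 3) (t : ℤ),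
    cdv (fun p => if p = i then t else 1) p = if p = i then 1 else t := by
  intro i p t
  fin_cases i <;> fin_cases p <;> simp [cdv]

section Core
variable (μ : Mx → Mx)
variable (hmul : ∀ A B : Mx, μ (A * B) = μ A * μ B)
variable (hdiag : ∀ a b c : ℤ,
  μ (Matrix.diagonal ![a, b, c]) = Matrix.diagonal ![b * c, a * c, a * b])

include hmul hdiag in
lemma core {i j : Fin 3} (hij : i ≠ j) :
    ∀ t, μ (T i j t) = T j i (t * (μ (T i j 1)) j i) := by
  obtain ⟨k, hik, hjk⟩ := exists_third i j hij
  apply scalarCore (fun t => μ (T i j t)) i j k hij hik hjk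
  · show μ (T i j 0) = 1
    rw [T_zero]; exact mu_one μ hdiag
  · intro t p q
    have R1 : Matrix.diagonal (fun p => if p = i then t else 1) * T i j 1 =
        T i j t * Matrix.diagonal (fun p => if p = i then t else 1) := by
      rw [diag_mul_T, T_mul_diag]
      congr 1
      rw [if_pos rfl, if_neg hij.symm, one_mul, mul_one]
    have h := congrArg μ R1
    rw [hmul, hmul, mu_diag μ hdiag] at h
    have hcd : cdv (fun p => if p = i then t else 1) = fun p => if p = i then (1:ℤ) else t := by
      funext p; exact cd_ind i p t
    rw [hcd] at h
    have h' := congrFun (congrFun h p) q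
    rwa [Matrix.diagonal_mul, Matrix.mul_diagonal] at h'
  · intro t p q
    have R2 : Matrix.diagonal (fun p => if p = j then t else 1) * T i j t =
        T i j 1 * Matrix.diagonal (fun p => if p = j then t else 1) := by
      rw [diag_mul_T, T_mul_diag]
      congr 1
      rw [if_pos rfl, if_neg hij, one_mul, mul_one]
    have h := congrArg μ R2
    rw [hmul, hmul, mu_diag μ hdiag] at h
    have hcd : cdv (fun p => if p = j then t else 1) = fun p => if p = j then (1:ℤ) else t := by
      funext p; exact cd_ind j p t
    rw [hcd] at h
    have h' := congrFun (congrFun h p) q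
    rwa [Matrix.diagonal_mul, Matrix.mul_diagonal] at h'
  · intro s t
    show μ (T i j s) * μ (T i j t) = μ (T i j (s + t))
    rw [← hmul, T_mul hij]

end Core

lemma dd_cdv : ∀ i j : Fin 3, i ≠ j →
    cdv (fun p => if p = i ∨ p = j then (-1:ℤ) else 1) =
      (fun p => if p = i ∨ p = j then (-1:ℤ) else 1) := by decide

section Core2
variable (μ : Mx → Mx)
variable (hmul : ∀ A B : Mx, μ (A * B) = μ A * μ B)
variable (hdiag : ∀ a b c : ℤ,
  μ (Matrix.diagonal ![a, b, c]) = Matrix.diagonal ![b * c, a * c, a * b])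

include hmul hdiag in
lemma coeff_inv {i j : Fin 3} (hij : i ≠ j) :
    (μ (T i j 1)) j i * (μ (T j i 1)) i j = 1 := by
  obtain ⟨k, hik, hjk⟩ := exists_third i j hij
  set m := (μ (T i j 1)) j i with hm
  set m' := (μ (T j i 1)) i j with hm'
  have hw : (T i j 1 * T j i (-1) * T i j 1) * (T i j 1 * T j i (-1) * T i j 1)
      = Matrix.diagonal (fun p => if p = i ∨ p = j then (-1:ℤ) else 1) := by
    fin_cases i <;> fin_cases j <;> first | (exact absurd rfl hij) | decide
  have h := congrArg μ hw
  rw [hmul, hmul, hmul, mu_diag μ hdiag, dd_cdv i j hij] at h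
  rw [core μ hmul hdiag hij 1, core μ hmul hdiag hij.symm (-1)] at h
  rw [← hm, ← hm', one_mul, neg_one_mul] at h
  set X := T j i m * T i j (-m') * T j i m with hX
  have c_ii : X i i = 1 - m * m' := by
    simp [hX, T_right_apply, T_apply, hij, hij.symm, hik, hik.symm, hjk, hjk.symm]; ring
  have c_ij : X i j = -m' := by
    simp [hX, T_right_apply, T_apply, hij, hij.symm, hik, hik.symm, hjk, hjk.symm]
  have c_ik : X i k = 0 := by
    simp [hX, T_right_apply, T_apply, hij, hij.symm, hik, hik.symm, hjk, hjk.symm]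
  have c_ji : X j i = 2 * m - m * m * m' := by
    simp [hX, T_right_apply, T_apply, hij, hij.symm, hik, hik.symm, hjk, hjk.symm]; ring
  have c_ki : X k i = 0 := by
    simp [hX, T_right_apply, T_apply, hij, hij.symm, hik, hik.symm, hjk, hjk.symm]
  have hE := congrFun (congrFun h i) i
  rw [Matrix.mul_apply, sum3 hij hik hjk, c_ii, c_ij, c_ik, c_ji, c_ki,
    Matrix.diagonal_apply_eq, if_pos (Or.inl rfl)] at hE
  have h2 : 2 * ((m * m' - 1) * (m * m' - 1)) = 0 := by linear_combination hE
  have h3 : (m * m' - 1) * (m * m' - 1) = 0 := by linarith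
  have h4 := mul_self_eq_zero.mp h3
  linarith

include hmul hdiag in
lemma steinberg :
    (μ (T 0 2 1)) 2 0 = -((μ (T 0 1 1)) 1 0 * (μ (T 1 2 1)) 2 1) := by
  have hw : T 0 1 1 * T 1 2 1 * T 0 1 (-1) * T 1 2 (-1) = T 0 2 1 := by decide
  have h := congrArg μ hw
  rw [hmul, hmul, hmul] at h
  rw [core μ hmul hdiag (show (0:Fin 3) ≠ 1 by decide) 1,
    core μ hmul hdiag (show (0:Fin 3) ≠ 1 by decide) (-1),
    core μ hmul hdiag (show (1:Fin 3) ≠ 2 by decide) 1,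
    core μ hmul hdiag (show (1:Fin 3) ≠ 2 by decide) (-1),
    core μ hmul hdiag (show (0:Fin 3) ≠ 2 by decide) 1] at h
  set a := (μ (T 0 1 1)) 1 0
  set b := (μ (T 1 2 1)) 2 1
  set c := (μ (T 0 2 1)) 2 0
  have hE := congrFun (congrFun h 2) 0
  simp [T_right_apply, T_apply] at hE
  linarith

end Core2

/-- The matrix of cofactors of `A`, i.e. the transpose of the adjugate of `A`. -/
def cof {R : Type*} [CommRing R] {n : ℕ} (A : Matrix (Fin n) (Fin n) R) :
    Matrix (Fin n) (Fin n) R :=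
  Matrix.transpose (Matrix.adjugate A)

lemma cof_one : cof (1 : Mx) = 1 := by simp [cof]

lemma cof_mul (A B : Mx) : cof (A * B) = cof A * cof B := by
  simp [cof, Matrix.adjugate_mul_distrib, Matrix.transpose_mul]

lemma conj_apply (w : Fin 3 → ℤ) (X : Mx) (p q : Fin 3) :
    (Matrix.diagonal w * X * Matrix.diagonal w) p q = w p * X p q * w q := by
  rw [Matrix.mul_diagonal, Matrix.diagonal_mul]

lemma cof_diagonal (d : Fin 3 → ℤ) : cof (Matrix.diagonal d) = Matrix.diagonal (cdv d) := by
  rw [cof, Matrix.adjugate_diagonal, Matrix.diagonal_transpose]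
  apply congrArg
  funext p
  rcases tri3 0 1 2 (by decide) (by decide) (by decide) p with rfl | rfl | rfl
  · rw [show (Finset.univ.erase (0:Fin 3)) = {1, 2} from by decide,
      Finset.prod_insert (by decide), Finset.prod_singleton]
    rfl
  · rw [show (Finset.univ.erase (1:Fin 3)) = {0, 2} from by decide,
      Finset.prod_insert (by decide), Finset.prod_singleton]
    rfl
  · rw [show (Finset.univ.erase (2:Fin 3)) = {0, 1} from by decide,
      Finset.prod_insert (by decide), Finset.prod_singleton]
    rfl

lemma transpose_T (i j : Fin 3) (t : ℤ) : (T i j t)ᵀ = T j i t := by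
  ext p q
  rw [Matrix.transpose_apply, T_apply, T_apply]
  congr 1
  · by_cases h : p = q
    · rw [if_pos h, if_pos h.symm]
    · rw [if_neg (fun hc => h hc.symm), if_neg h]
  · by_cases h : q = i ∧ p = j
    · rw [if_pos h, if_pos ⟨h.2, h.1⟩]
    · rw [if_neg h, if_neg (fun hc => h ⟨hc.2, hc.1⟩)]

lemma sixPairs : ∀ i j : Fin 3, i ≠ j →
    i = 0 ∧ j = 1 ∨ i = 0 ∧ j = 2 ∨ i = 1 ∧ j = 0 ∨
    i = 1 ∧ j = 2 ∨ i = 2 ∧ j = 0 ∨ i = 2 ∧ j = 1 := by decide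

lemma det_T : ∀ i j : Fin 3, i ≠ j → ∀ t : ℤ, (T i j t).det = 1 := by
  intro i j hij t
  rcases sixPairs i j hij with ⟨rfl, rfl⟩|⟨rfl, rfl⟩|⟨rfl, rfl⟩|⟨rfl, rfl⟩|⟨rfl, rfl⟩|⟨rfl, rfl⟩ <;>
    simp [Matrix.det_fin_three, T_apply]

lemma adj_T {i j : Fin 3} (hij : i ≠ j) (t : ℤ) :
    Matrix.adjugate (T i j t) = T i j (-t) := by
  calc Matrix.adjugate (T i j t) = Matrix.adjugate (T i j t) * 1 := (mul_one _).symm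
    _ = Matrix.adjugate (T i j t) * (T i j t * T i j (-t)) := by rw [T_mul_inv hij t]
    _ = (Matrix.adjugate (T i j t) * T i j t) * T i j (-t) := by rw [mul_assoc]
    _ = ((T i j t).det • (1:Mx)) * T i j (-t) := by rw [Matrix.adjugate_mul]
    _ = T i j (-t) := by rw [det_T i j hij, one_smul, one_mul]

lemma cof_T {i j : Fin 3} (hij : i ≠ j) (t : ℤ) : cof (T i j t) = T j i (-t) := by
  rw [cof, adj_T hij, transpose_T]

section Master
variable (μ : Mx → Mx)
variable (hmul : ∀ A B : Mx, μ (A * B) = μ A * μ B)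
variable (hdiag : ∀ a b c : ℤ,
  μ (Matrix.diagonal ![a, b, c]) = Matrix.diagonal ![b * c, a * c, a * b])

include hmul hdiag in
lemma master (a b : ℤ) (ha2 : a * a = 1) (hb2 : b * b = 1)
    (h01 : ∀ t, μ (T 0 1 t) = T 1 0 (t * a))
    (h10 : ∀ t, μ (T 1 0 t) = T 0 1 (t * a))
    (h12 : ∀ t, μ (T 1 2 t) = T 2 1 (t * b))
    (h21 : ∀ t, μ (T 2 1 t) = T 1 2 (t * b))
    (h02 : ∀ t, μ (T 0 2 t) = T 2 0 (t * -(a * b)))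
    (h20 : ∀ t, μ (T 2 0 t) = T 0 2 (t * -(a * b))) :
    ∀ A : Mx, μ A = Matrix.diagonal ![-a,1,-b] * cof A * Matrix.diagonal ![-a,1,-b] := by
  have hWW : Matrix.diagonal ![-a,1,-b] * Matrix.diagonal ![-a,1,-b] = (1 : Mx) := by
    rw [Matrix.diagonal_mul_diagonal]
    have hv : (fun i => (![-a,1,-b] : Fin 3 → ℤ) i * ![-a,1,-b] i) = fun _ => (1:ℤ) := by
      funext p
      fin_cases p <;> simp <;>
        first
          | exact ha2
          | exact hb2
          | linear_combination ha2
          | linear_combination hb2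
    rw [hv, Matrix.diagonal_one]
  intro A
  refine Submonoid.closure_induction
    (motive := fun x _ => μ x = Matrix.diagonal ![-a,1,-b] * cof x * Matrix.diagonal ![-a,1,-b])
    ?_ ?_ ?_ (genAll A)
  · rintro x (⟨d, rfl⟩ | ⟨i, j, t, hij, rfl⟩)
    · show μ (Matrix.diagonal d) = _
      rw [mu_diag μ hdiag, cof_diagonal, Matrix.diagonal_mul_diagonal,
        Matrix.diagonal_mul_diagonal]
      apply congrArg
      funext p
      fin_cases p <;>
        simp [cdv] <;>
        first
          | ring1
          | linear_combination (d 1 * d 2) * ha2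
          | linear_combination (-(d 1 * d 2)) * ha2
          | linear_combination (d 0 * d 1) * hb2
          | linear_combination (-(d 0 * d 1)) * hb2
    · show μ (T i j t) = _
      rcases sixPairs i j hij with ⟨rfl, rfl⟩|⟨rfl, rfl⟩|⟨rfl, rfl⟩|⟨rfl, rfl⟩|⟨rfl, rfl⟩|⟨rfl, rfl⟩ <;>
        [rw [h01 t, cof_T (show (0:Fin 3) ≠ 1 by decide)];
         rw [h02 t, cof_T (show (0:Fin 3) ≠ 2 by decide)];
         rw [h10 t, cof_T (show (1:Fin 3) ≠ 0 by decide)];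
         rw [h12 t, cof_T (show (1:Fin 3) ≠ 2 by decide)];
         rw [h20 t, cof_T (show (2:Fin 3) ≠ 0 by decide)];
         rw [h21 t, cof_T (show (2:Fin 3) ≠ 1 by decide)]] <;>
      · ext p q
        rw [conj_apply]
        fin_cases p <;> fin_cases q <;>
          simp [T_apply] <;>
          first
            | ring1
            | linear_combination ha2
            | linear_combination -ha2
            | linear_combination hb2
            | linear_combination -hb2
            | linear_combination t * ha2
            | linear_combination -t * ha2
            | linear_combination t * hb2
            | linear_combination -t * hb2
  · show μ 1 = _
    rw [mu_one μ hdiag, cof_one, Matrix.mul_one, hWW]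
  · intro x y hx hy hpx hpy
    show μ (x * y) = _
    rw [hmul, hpx, hpy, cof_mul]
    set W : Mx := Matrix.diagonal ![-a,1,-b]
    calc (W * cof x * W) * (W * cof y * W)
        = W * cof x * ((W * W) * (cof y * W)) := by simp only [Matrix.mul_assoc]
      _ = W * cof x * (cof y * W) := by rw [hWW, Matrix.one_mul]
      _ = W * (cof x * cof y) * W := by simp only [Matrix.mul_assoc]

end Master

theorem stmt13 (μ : Matrix (Fin 3) (Fin 3) ℤ → Matrix (Fin 3) (Fin 3) ℤ)
    (hmul : ∀ A B : Matrix (Fin 3) (Fin 3) ℤ, μ (A * B) = μ A * μ B)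
    (hdiag : ∀ a b c : ℤ,
      μ (Matrix.diagonal ![a, b, c]) = Matrix.diagonal ![b * c, a * c, a * b]) :
    ∃ W : Matrix (Fin 3) (Fin 3) ℤ,
      (W = Matrix.diagonal ![1, 1, 1] ∨ W = Matrix.diagonal ![1, 1, -1] ∨
        W = Matrix.diagonal ![-1, 1, 1] ∨ W = Matrix.diagonal ![-1, 1, -1]) ∧
      ∀ A : Matrix (Fin 3) (Fin 3) ℤ, μ A = W * cof A * W := by
  have h1 := coeff_inv μ hmul hdiag (show (0:Fin 3) ≠ 1 by decide)
  have h2 := coeff_inv μ hmul hdiag (show (1:Fin 3) ≠ 2 by decide)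
  have h3 := coeff_inv μ hmul hdiag (show (0:Fin 3) ≠ 2 by decide)
  have hst := steinberg μ hmul hdiag
  set a := μ (T 0 1 1) 1 0 with haD
  set a' := μ (T 1 0 1) 0 1 with haD'
  set b := μ (T 1 2 1) 2 1 with hbD
  set b' := μ (T 2 1 1) 1 2 with hbD'
  set c := μ (T 0 2 1) 2 0 with hcD
  set c' := μ (T 2 0 1) 0 2 with hcD'
  obtain ⟨hav, ha'⟩ : (a = 1 ∨ a = -1) ∧ a' = a := by
    rcases Int.mul_eq_one_iff_eq_one_or_neg_one.mp h1 with ⟨x, y⟩ | ⟨x, y⟩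
    · exact ⟨Or.inl x, by rw [x, y]⟩
    · exact ⟨Or.inr x, by rw [x, y]⟩
  obtain ⟨hbv, hb'⟩ : (b = 1 ∨ b = -1) ∧ b' = b := by
    rcases Int.mul_eq_one_iff_eq_one_or_neg_one.mp h2 with ⟨x, y⟩ | ⟨x, y⟩
    · exact ⟨Or.inl x, by rw [x, y]⟩
    · exact ⟨Or.inr x, by rw [x, y]⟩
  have hc' : c' = c := by
    rcases Int.mul_eq_one_iff_eq_one_or_neg_one.mp h3 with ⟨x, y⟩ | ⟨x, y⟩ <;> rw [x, y]
  have ha2 : a * a = 1 := by rcases hav with h | h <;> rw [h] <;> norm_num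
  have hb2 : b * b = 1 := by rcases hbv with h | h <;> rw [h] <;> norm_num
  have h01 : ∀ t, μ (T 0 1 t) = T 1 0 (t * a) :=
    core μ hmul hdiag (show (0:Fin 3) ≠ 1 by decide)
  have h10 : ∀ t, μ (T 1 0 t) = T 0 1 (t * a) := by
    intro t
    rw [core μ hmul hdiag (show (1:Fin 3) ≠ 0 by decide) t, ← haD', ha']
  have h12 : ∀ t, μ (T 1 2 t) = T 2 1 (t * b) :=
    core μ hmul hdiag (show (1:Fin 3) ≠ 2 by decide)
  have h21 : ∀ t, μ (T 2 1 t) = T 1 2 (t * b) := by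
    intro t
    rw [core μ hmul hdiag (show (2:Fin 3) ≠ 1 by decide) t, ← hbD', hb']
  have h02 : ∀ t, μ (T 0 2 t) = T 2 0 (t * -(a * b)) := by
    intro t
    rw [core μ hmul hdiag (show (0:Fin 3) ≠ 2 by decide) t, ← hcD, hst]
  have h20 : ∀ t, μ (T 2 0 t) = T 0 2 (t * -(a * b)) := by
    intro t
    rw [core μ hmul hdiag (show (2:Fin 3) ≠ 0 by decide) t, ← hcD', hc', hst]
  refine ⟨Matrix.diagonal ![-a, 1, -b], ?_, master μ hmul hdiag a b ha2 hb2 h01 h10 h12 h21 h02 h20⟩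
  rcases hav with h | h <;> rcases hbv with h' | h'
  · right; right; right
    rw [h, h']
  · right; right; left
    rw [h, h']
    apply congrArg; funext p; fin_cases p <;> norm_num
  · right; left
    rw [h, h']
    apply congrArg; funext p; fin_cases p <;> norm_num
  · left
    rw [h, h']
    apply congrArg; funext p; fin_cases p <;> norm_num
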